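/- If u₁, u₂, u₃ are three distinct solutions of the Riccati equation u' = f(x) + g(x)u + h(x)u², then for any real constant k, the function u(x) = (u₁(x)(u₃(x) − u₂(x)) + k·u₂(x)(u₁(x) − u₃(x)))/(u₃(x) − u₂(x) + k(u₁(x) − u₃(x))) is also a solution of the same Riccati equation, at every point where the denominator is nonzero. -/

import Mathlib

/-- Nonlinear superposition rule for the Riccati equation: given three distinct
solutions `u₁, u₂, u₃` of `u' = f + g·u + h·u²` and any `k ∈ ℝ`, the combination
`(u₁(u₃−u₂) + k u₂(u₁−u₃))/(u₃−u₂+k(u₁−u₃))` is again a solution wherever the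
denominator does not vanish. -/
theorem riccati_superposition
    (f g h u₁ u₂ u₃ : ℝ → ℝ) (k : ℝ)
    (h₁ : ∀ x, HasDerivAt u₁ (f x + g x * u₁ x + h x * (u₁ x) ^ 2) x)
    (h₂ : ∀ x, HasDerivAt u₂ (f x + g x * u₂ x + h x * (u₂ x) ^ 2) x)
    (h₃ : ∀ x, HasDerivAt u₃ (f x + g x * u₃ x + h x * (u₃ x) ^ 2) x)
    (h₁₂ : u₁ ≠ u₂) (h₂₃ : u₂ ≠ u₃) (h₁₃ : u₁ ≠ u₃)
    (u : ℝ → ℝ)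
    (hu : u = fun x =>
      (u₁ x * (u₃ x - u₂ x) + k * u₂ x * (u₁ x - u₃ x)) /
        (u₃ x - u₂ x + k * (u₁ x - u₃ x))) :
    ∀ x, u₃ x - u₂ x + k * (u₁ x - u₃ x) ≠ 0 →
      HasDerivAt u (f x + g x * u x + h x * (u x) ^ 2) x := by
  intro x hD
  set d₁ := f x + g x * u₁ x + h x * (u₁ x) ^ 2 with hd₁
  set d₂ := f x + g x * u₂ x + h x * (u₂ x) ^ 2 with hd₂
  set d₃ := f x + g x * u₃ x + h x * (u₃ x) ^ 2 with hd₃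
  have hN : HasDerivAt (fun x => u₁ x * (u₃ x - u₂ x) + k * u₂ x * (u₁ x - u₃ x))
      (d₁ * (u₃ x - u₂ x) + u₁ x * (d₃ - d₂) +
        (k * d₂ * (u₁ x - u₃ x) + k * u₂ x * (d₁ - d₃))) x := by
    exact (((h₁ x).mul ((h₃ x).sub (h₂ x))).add
      ((((h₂ x).const_mul k).mul ((h₁ x).sub (h₃ x)))) )
  have hDd : HasDerivAt (fun x => u₃ x - u₂ x + k * (u₁ x - u₃ x))
      (d₃ - d₂ + k * (d₁ - d₃)) x :=
    ((h₃ x).sub (h₂ x)).add (((h₁ x).sub (h₃ x)).const_mul k)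
  have := hN.div hDd hD
  rw [hu]
  convert this using 1
  case e'_4 => rfl
  case e'_5 => rfl
  case e'_8 => rfl
  beta_reduce
  field_simp
  ring
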